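/- arXiv:2210.14092 — 2 statements merged into one kernel-verified Lean document; each statement's English description precedes it below -/
import Mathlib

section
/- Let X̃ be a fuzzy incidence graph. Then X̃ is a strong fuzzy incidence graph if and only if every cycle in X̃ is a weak fuzzy incidence cycle (i.e., every cycle of the support graph contains no unique pair of least η-weight). -/
open scoped BigOperators

/-- A fuzzy incidence graph on a finite vertex type `V`.  An (undirected, loopless) edge `xy`
is encoded by the symmetric membership function `rho`, and the incidence pair `(x, xy)`
is encoded by `eta x y` (so `eta x y` is the membership value of the pair consisting of the
vertex `x` and the edge joining `x` and `y`). All membership values lie in `[0,1]`,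
`rho xy ≤ min (eps x) (eps y)` and `eta (x, xy) ≤ min (eps x) (rho xy)`. -/
structure FIG (V : Type) [Fintype V] [DecidableEq V] where
  eps : V → ℝ
  rho : V → V → ℝ
  eta : V → V → ℝ
  eps_nonneg : ∀ x, 0 ≤ eps x
  eps_le_one : ∀ x, eps x ≤ 1
  rho_nonneg : ∀ x y, 0 ≤ rho x y
  rho_symm : ∀ x y, rho x y = rho y x
  rho_le : ∀ x y, rho x y ≤ min (eps x) (eps y)
  rho_irrefl : ∀ x, rho x x = 0
  eta_nonneg : ∀ x y, 0 ≤ eta x y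
  eta_le : ∀ x y, eta x y ≤ min (eps x) (rho x y)

namespace FIG

variable {V V₁ V₂ : Type} [Fintype V] [DecidableEq V]
  [Fintype V₁] [DecidableEq V₁] [Fintype V₂] [DecidableEq V₂]

/-- `(x, xy)` is a pair of the fuzzy incidence graph (i.e. belongs to the support `η*`). -/
def IsPair (G : FIG V) (x y : V) : Prop := 0 < G.eta x y

/-- the minimum of the two pair weights along one edge step of an incidence path -/
def pairMin (G : FIG V) (a b : V) : ℝ := min (G.eta a b) (G.eta b a)

/-- the minimum of the pair weights along the internal steps of a vertex list -/
def chainStrength (G : FIG V) : List V → ℝ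
  | [] => 1
  | [_] => 1
  | a :: b :: l => min (G.pairMin a b) (G.chainStrength (b :: l))

/-- The set of incidence strengths of incidence paths from the vertex `x` to the edge `yz`:
a path is recorded by its (pairwise distinct) sequence of vertices, starting at `x` and ending
at an endpoint of the edge `yz`; its strength is the minimum of the weights of its pairs
(pairs of weight `0` are not genuine pairs, but a list using them has strength `0`, so
including such lists does not alter the supremum below). -/
def pathStrengths (G : FIG V) (x y z : V) : Set ℝ :=
  {s | ∃ l : List V, l.Nodup ∧ l.head? = some x ∧
      ((l.getLast? = some y ∧ s = min (G.chainStrength l) (G.eta y z)) ∨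
       (l.getLast? = some z ∧ s = min (G.chainStrength l) (G.eta z y)))}

/-- `ICONN G x y z` is the greatest incidence strength of an incidence path from the
vertex `x` to the edge `yz` (the incidence connectivity `ICONN_G (x, yz)`). -/
noncomputable def ICONN (G : FIG V) (x y z : V) : ℝ := sSup (G.pathStrengths x y z)

/-- the fuzzy incidence graph obtained by deleting the pair `(a, ab)` -/
def deletePair (G : FIG V) (a b : V) : FIG V where
  eps := G.eps
  rho := G.rho
  eta := fun u v => if u = a ∧ v = b then 0 else G.eta u v
  eps_nonneg := G.eps_nonneg
  eps_le_one := G.eps_le_one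
  rho_nonneg := G.rho_nonneg
  rho_symm := G.rho_symm
  rho_le := G.rho_le
  rho_irrefl := G.rho_irrefl
  eta_nonneg := by
    intro u v; split
    · exact le_refl 0
    · exact G.eta_nonneg u v
  eta_le := by
    intro u v; split
    · exact le_min (G.eps_nonneg u) (G.rho_nonneg u v)
    · exact G.eta_le u v

/-- The pair `(x, xy)` is strong: its weight is at least the incidence connectivity
between `x` and the edge `xy` in the graph obtained by deleting the pair `(x, xy)`. -/
def IsStrongPair (G : FIG V) (x y : V) : Prop :=
  (G.deletePair x y).ICONN x x y ≤ G.eta x y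

/-- a strong fuzzy incidence graph: every pair is strong -/
def Strong (G : FIG V) : Prop := ∀ x y, G.IsPair x y → G.IsStrongPair x y

/-- The pair `(x, xy)` is effective: `η(x, xy) = min (ε x) (ρ xy)`. -/
def EffectivePair (G : FIG V) (x y : V) : Prop :=
  G.eta x y = min (G.eps x) (G.rho x y)

/-- a fuzzy incidence graph in which every pair is effective -/
def EffectivePairs (G : FIG V) : Prop := ∀ x y, G.IsPair x y → G.EffectivePair x y

/-- A cycle in the fuzzy incidence graph `G`, recorded as a list of (at least three)
pairwise distinct vertices, cyclically consecutive vertices being joined by edges all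
of whose pairs belong to the support `η*`. -/
def IsCycle (G : FIG V) (l : List V) : Prop :=
  3 ≤ l.length ∧ l.Nodup ∧
  ∀ i : Fin l.length, G.IsPair (l.get i) (l.get (finRotate l.length i)) ∧ G.IsPair (l.get (finRotate l.length i)) (l.get i)

/-- the weight of a pair of the cycle `l`: the pair indexed by `(i, true)` is
`(lᵢ, lᵢlᵢ₊₁)` and the pair indexed by `(i, false)` is `(lᵢ₊₁, lᵢlᵢ₊₁)` (indices mod length) -/
def cyclePairWeight (G : FIG V) (l : List V) (p : Fin l.length × Bool) : ℝ :=
  if p.2 then G.eta (l.get p.1) (l.get (finRotate l.length p.1)) else G.eta (l.get (finRotate l.length p.1)) (l.get p.1)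

/-- a weak fuzzy incidence cycle: a cycle with no unique pair of least weight, i.e. at
least two distinct pairs of the cycle attain the minimum pair weight of the cycle -/
def IsWFIC (G : FIG V) (l : List V) : Prop :=
  G.IsCycle l ∧ ∃ p q : Fin l.length × Bool, p ≠ q ∧
    G.cyclePairWeight l p = G.cyclePairWeight l q ∧
    ∀ r : Fin l.length × Bool, G.cyclePairWeight l p ≤ G.cyclePairWeight l r

section Auxiliary

-- ### basic bounds

lemma eta_le_one (G : FIG V) (x y : V) : G.eta x y ≤ 1 :=
  ((G.eta_le x y).trans (min_le_left _ _)).trans (G.eps_le_one x)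

lemma pairMin_symm (G : FIG V) (a b : V) : G.pairMin a b = G.pairMin b a := min_comm _ _

lemma pairMin_nonneg (G : FIG V) (a b : V) : 0 ≤ G.pairMin a b :=
  le_min (G.eta_nonneg a b) (G.eta_nonneg b a)

lemma chainStrength_nonneg (G : FIG V) : ∀ l : List V, 0 ≤ G.chainStrength l
  | [] => zero_le_one
  | [_] => zero_le_one
  | a :: b :: l => le_min (G.pairMin_nonneg a b) (chainStrength_nonneg G (b :: l))

lemma deletePair_eta_le (G : FIG V) (x y u v : V) : (G.deletePair x y).eta u v ≤ G.eta u v := by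
  simp only [deletePair]; split
  · exact G.eta_nonneg u v
  · exact le_rfl

lemma deletePair_eta_of_ne (G : FIG V) {x y u v : V} (h : ¬(u = x ∧ v = y)) :
    (G.deletePair x y).eta u v = G.eta u v := by
  simp only [deletePair, if_neg h]

lemma deletePair_eta_self (G : FIG V) (x y : V) : (G.deletePair x y).eta x y = 0 := by
  simp [deletePair]

lemma pairMin_deletePair_eq (G : FIG V) {u v a b : V}
    (h1 : ¬(a = u ∧ b = v)) (h2 : ¬(b = u ∧ a = v)) :
    (G.deletePair u v).pairMin a b = G.pairMin a b := by
  unfold pairMin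
  rw [G.deletePair_eta_of_ne h1, G.deletePair_eta_of_ne h2]

lemma pairMin_deletePair_le (G : FIG V) (x y a b : V) :
    (G.deletePair x y).pairMin a b ≤ G.pairMin a b :=
  min_le_min (G.deletePair_eta_le x y a b) (G.deletePair_eta_le x y b a)

lemma chain'_cons' {α : Type*} {R : α → α → Prop} {a b : α} {l : List α} :
    List.Chain' R (a :: b :: l) ↔ R a b ∧ List.Chain' R (b :: l) :=
  List.isChain_cons_cons

lemma chain'_iff_get' {α : Type*} {R : α → α → Prop} {l : List α} :
    List.Chain' R l ↔ ∀ (i : ℕ) (h : i < l.length - 1),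
      R (l.get ⟨i, by omega⟩) (l.get ⟨i + 1, by omega⟩) := by
  unfold List.Chain'
  rw [List.isChain_iff_getElem]
  constructor
  · intro h i hi; exact h i (by omega)
  · intro h i hi; exact h i (by omega)

lemma chain'_reverse' {α : Type*} {R : α → α → Prop} {l : List α} :
    List.Chain' R l.reverse ↔ List.Chain' (flip R) l :=
  List.isChain_reverse

lemma lt_chainStrength_iff (G : FIG V) {w : ℝ} (hw : w < 1) :
    ∀ l : List V, (w < G.chainStrength l ↔ l.Chain' (fun a b => w < G.pairMin a b))
  | [] => by simpa [chainStrength, List.Chain'] using hw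
  | [a] => by simpa [chainStrength, List.Chain'] using hw
  | a :: b :: l => by
    rw [chain'_cons', ← lt_chainStrength_iff G hw (b :: l)]
    show w < min _ _ ↔ _
    rw [lt_min_iff]

-- ### pathStrengths

lemma pathStrengths_le_one (G : FIG V) {x y z : V} {s : ℝ}
    (hs : s ∈ G.pathStrengths x y z) : s ≤ 1 := by
  obtain ⟨l, -, -, (⟨-, rfl⟩ | ⟨-, rfl⟩)⟩ := hs
  · exact (min_le_right _ _).trans (G.eta_le_one _ _)
  · exact (min_le_right _ _).trans (G.eta_le_one _ _)

lemma bddAbove_pathStrengths (G : FIG V) (x y z : V) : BddAbove (G.pathStrengths x y z) :=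
  ⟨1, fun _ hs => G.pathStrengths_le_one hs⟩

lemma pathStrengths_nonempty (G : FIG V) (x z : V) : (G.pathStrengths x x z).Nonempty := by
  refine ⟨min (G.chainStrength [x]) (G.eta x z), [x], by simp, by simp, Or.inl ⟨by simp, rfl⟩⟩

-- ### nat/fin arithmetic helpers

lemma nat_dvd_of_add_mod {n a i : ℕ} (hi : i < n) (h : (a + i) % n = i) : n ∣ a := by
  have h1 : (a + i) % n = (0 + i) % n := by simpa [Nat.mod_eq_of_lt hi] using h
  exact (Nat.modEq_zero_iff_dvd).mp (Nat.ModEq.add_right_cancel' i h1)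

lemma nat_mod_succ_inj {n k i : ℕ} (hk : k < n) (hi : i < n)
    (h : (k+1) % n = (i+1) % n) : k = i :=
  (Nat.ModEq.add_right_cancel' 1 h).eq_of_lt_of_lt hk hi

lemma finRotate_val' : ∀ {n : ℕ}, 0 < n → ∀ i : Fin n, ((finRotate n) i).val = (i.val + 1) % n
  | 0, h, _ => absurd h (lt_irrefl 0)
  | (m+1), _, i => by
    rw [finRotate_succ_apply, Fin.add_def]
    simp [Fin.val_one']

lemma head?_eq_get {l : List V} (h : 0 < l.length) : l.head? = some (l.get ⟨0, h⟩) := by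
  rw [List.head?_eq_getElem?, List.getElem?_eq_getElem h, List.get_eq_getElem]

lemma getLast?_eq_get {l : List V} (h : 0 < l.length) :
    l.getLast? = some (l.get ⟨l.length - 1, by omega⟩) := by
  rw [List.getLast?_eq_getElem?, List.getElem?_eq_getElem (by omega), List.get_eq_getElem]


-- ### the step lemma: a non-deleted step of a cycle has large pair weight

lemma pair_step (G : FIG V) {l : List V} (hnd : l.Nodup) (hlen3 : 3 ≤ l.length)
    (i : Fin l.length) {w : ℝ}
    (hgt : ∀ (k : Fin l.length) (b : Bool), k ≠ i → w < G.cyclePairWeight l (k, b))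
    {u v : V}
    (huv : (u = l.get i ∧ v = l.get (finRotate l.length i)) ∨
           (u = l.get (finRotate l.length i) ∧ v = l.get i))
    {k : ℕ} (hkn : k < l.length) (hki : k ≠ i.val)
    (hmid : ¬(k = (i.val + 1) % l.length ∧ (k+1) % l.length = i.val)) :
    w < (G.deletePair u v).pairMin (l.get ⟨k, hkn⟩)
        (l.get ⟨(k+1) % l.length, Nat.mod_lt _ (by omega)⟩) := by
  have hn0 : 0 < l.length := by omega
  have hinj : Function.Injective l.get := List.nodup_iff_injective_get.mp hnd
  have hrot : finRotate l.length ⟨k, hkn⟩ = ⟨(k+1) % l.length, Nat.mod_lt _ hn0⟩ :=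
    Fin.ext (finRotate_val' hn0 _)
  have hroti : (finRotate l.length i).val = (i.val + 1) % l.length := finRotate_val' hn0 i
  have hkine : (⟨k, hkn⟩ : Fin l.length) ≠ i := fun h => hki (congrArg Fin.val h)
  have h1 : w < G.eta (l.get ⟨k, hkn⟩) (l.get ⟨(k+1) % l.length, Nat.mod_lt _ hn0⟩) := by
    have := hgt ⟨k, hkn⟩ true hkine
    simpa [cyclePairWeight, hrot] using this
  have h2 : w < G.eta (l.get ⟨(k+1) % l.length, Nat.mod_lt _ hn0⟩) (l.get ⟨k, hkn⟩) := by
    have := hgt ⟨k, hkn⟩ false hkine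
    simpa [cyclePairWeight, hrot] using this
  rw [G.pairMin_deletePair_eq]
  · exact lt_min_iff.mpr ⟨h1, h2⟩
  · rintro ⟨ha, hb⟩
    rcases huv with ⟨hu, hv⟩ | ⟨hu, hv⟩
    · exact hki (congrArg Fin.val (hinj (ha.trans hu)))
    · refine hmid ⟨?_, ?_⟩
      · have := congrArg Fin.val (hinj (ha.trans hu))
        rw [hroti] at this; exact this
      · exact congrArg Fin.val (hinj (hb.trans hv))
  · rintro ⟨hb, ha⟩
    rcases huv with ⟨hu, hv⟩ | ⟨hu, hv⟩
    · refine hmid ⟨?_, ?_⟩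
      · have := congrArg Fin.val (hinj (ha.trans hv))
        rw [hroti] at this; exact this
      · have := congrArg Fin.val (hinj (hb.trans hu))
        simpa [hroti] using this
    · exact hki (congrArg Fin.val (hinj (ha.trans hv)))


lemma chain'_rotate (G : FIG V) {l : List V} (hnd : l.Nodup) (hlen3 : 3 ≤ l.length)
    (i : Fin l.length) {w : ℝ}
    (hgt : ∀ (k : Fin l.length) (b : Bool), k ≠ i → w < G.cyclePairWeight l (k, b))
    {u v : V}
    (huv : (u = l.get i ∧ v = l.get (finRotate l.length i)) ∨
           (u = l.get (finRotate l.length i) ∧ v = l.get i)) :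
    (l.rotate (i.val + 1)).Chain' (fun a b => w < (G.deletePair u v).pairMin a b) := by
  have hn0 : 0 < l.length := by omega
  rw [chain'_iff_get']
  intro j hj
  rw [List.length_rotate] at hj
  rw [List.get_rotate, List.get_rotate]
  have hkn : (j + (i.val + 1)) % l.length < l.length := Nat.mod_lt _ hn0
  have hki : (j + (i.val + 1)) % l.length ≠ i.val := by
    intro h
    have h2 : ((j + 1) + i.val) % l.length = i.val := by
      have : j + (i.val + 1) = (j + 1) + i.val := by ring
      rwa [this] at h
    have hd := nat_dvd_of_add_mod i.isLt h2
    have := Nat.le_of_dvd (by omega) hd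
    omega
  have hidx2 : (j + 1 + (i.val + 1)) % l.length
      = ((j + (i.val + 1)) % l.length + 1) % l.length := by
    have h1 : ((j + (i.val + 1)) % l.length + 1) % l.length = (j + (i.val + 1) + 1) % l.length :=
      (Nat.mod_modEq (j + (i.val + 1)) l.length).add_right 1
    have h3 : j + 1 + (i.val + 1) = j + (i.val + 1) + 1 := by ring
    rw [h3, h1]
  have hmid : ¬((j + (i.val + 1)) % l.length = (i.val + 1) % l.length ∧
      ((j + (i.val + 1)) % l.length + 1) % l.length = i.val) := by
    rintro ⟨hA, hB⟩
    rw [hA] at hB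
    have hB2 : (i.val + 2) % l.length = i.val := by
      have h1 : ((i.val + 1) % l.length + 1) % l.length = (i.val + 1 + 1) % l.length :=
        (Nat.mod_modEq (i.val + 1) l.length).add_right 1
      have h2 : i.val + 1 + 1 = i.val + 2 := by ring
      rw [h2] at h1
      exact h1.symm.trans hB
    have h3 : (2 + i.val) % l.length = i.val := by rwa [Nat.add_comm] at hB2
    have hd := nat_dvd_of_add_mod i.isLt h3
    have := Nat.le_of_dvd (by omega) hd
    omega
  have key := G.pair_step hnd hlen3 i hgt huv hkn hki hmid
  convert key using 3
  exact Fin.ext hidx2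


lemma get_congr (l : List V) {a b : ℕ} (ha : a < l.length) (hb : b < l.length) (h : a = b) :
    l.get ⟨a, ha⟩ = l.get ⟨b, hb⟩ := by subst h; rfl

lemma head?_rotate {l : List V} (hn0 : 0 < l.length) (m : ℕ) :
    (l.rotate m).head? = some (l.get ⟨m % l.length, Nat.mod_lt _ hn0⟩) := by
  rw [head?_eq_get (by rwa [List.length_rotate]), List.get_rotate]
  exact congrArg some (get_congr l _ _ (by simp))

lemma getLast?_rotate {l : List V} (hn0 : 0 < l.length) (m : ℕ) :
    (l.rotate m).getLast? = some (l.get ⟨(l.length - 1 + m) % l.length, Nat.mod_lt _ hn0⟩) := by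
  rw [getLast?_eq_get (by rwa [List.length_rotate]), List.get_rotate]
  exact congrArg some (get_congr l _ _ (by simp [List.length_rotate]))

lemma finRotate_ne_self {n : ℕ} (hn : 2 ≤ n) (i : Fin n) : finRotate n i ≠ i := by
  intro h
  have h2 : (i.val + 1) % n = i.val := by
    rw [← finRotate_val' (by omega) i]; exact congrArg Fin.val h
  have h3 : (1 + i.val) % n = i.val := by rwa [Nat.add_comm] at h2
  have := Nat.le_of_dvd one_pos (nat_dvd_of_add_mod i.isLt h3)
  omega

lemma cyclePairWeight_le_one (G : FIG V) (l : List V) (p : Fin l.length × Bool) :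
    G.cyclePairWeight l p ≤ 1 := by
  unfold cyclePairWeight; split <;> exact G.eta_le_one _ _

lemma eta_lt_ICONN_of_unique_min (G : FIG V) {l : List V} (hlen3 : 3 ≤ l.length) (hnd : l.Nodup)
    (i : Fin l.length) (b : Bool)
    (hgt : ∀ r, r ≠ (i, b) → G.cyclePairWeight l (i, b) < G.cyclePairWeight l r)
    {x y : V}
    (hxy : (b = true ∧ x = l.get i ∧ y = l.get (finRotate l.length i)) ∨
           (b = false ∧ x = l.get (finRotate l.length i) ∧ y = l.get i)) :
    G.eta x y < (G.deletePair x y).ICONN x x y := by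
  have hn0 : 0 < l.length := by omega
  set w := G.cyclePairWeight l (i, b) with hwdef
  have hgt' : ∀ (k : Fin l.length) (b' : Bool), k ≠ i → w < G.cyclePairWeight l (k, b') :=
    fun k b' hk => hgt (k, b') (fun h => hk (congrArg Prod.fst h))
  have hnb : w < G.cyclePairWeight l (i, !b) := hgt (i, !b) (by simp)
  have hw1 : w < 1 := lt_of_lt_of_le hnb (G.cyclePairWeight_le_one l _)
  have hinj : Function.Injective l.get := List.nodup_iff_injective_get.mp hnd
  have hgne : l.get (finRotate l.length i) ≠ l.get i :=
    fun h => finRotate_ne_self (by omega) i (hinj h)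
  have hxyv : G.eta x y = w := by
    rcases hxy with ⟨hb, hxv, hyv⟩ | ⟨hb, hxv, hyv⟩ <;>
      simp [hb, hxv, hyv, hwdef, cyclePairWeight]
  have hyxv : G.eta y x = G.cyclePairWeight l (i, !b) := by
    rcases hxy with ⟨hb, hxv, hyv⟩ | ⟨hb, hxv, hyv⟩ <;>
      simp [hb, hxv, hyv, cyclePairWeight]
  have hxyne : x ≠ y := by
    rcases hxy with ⟨hb, hxv, hyv⟩ | ⟨hb, hxv, hyv⟩
    · rw [hxv, hyv]; exact hgne.symm
    · rw [hxv, hyv]; exact hgne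
  have hyx' : (G.deletePair x y).eta y x = G.eta y x :=
    G.deletePair_eta_of_ne (by rintro ⟨h, -⟩; exact hxyne h.symm)
  have hwyx : w < (G.deletePair x y).eta y x := by rw [hyx', hyxv]; exact hnb
  -- the incidence path around the cycle avoiding the deleted pair
  rcases hxy with ⟨hb, hxv, hyv⟩ | ⟨hb, hxv, hyv⟩
  · -- b = true : path is the reversed rotation
    set L : List V := (l.rotate (i.val + 1)).reverse with hL
    have hchain0 := G.chain'_rotate hnd hlen3 i hgt' (Or.inl ⟨hxv, hyv⟩)
    have hchain : L.Chain' (fun a c => w < (G.deletePair x y).pairMin a c) := by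
      rw [hL, chain'_reverse']
      refine hchain0.imp ?_
      intro a c h
      show w < (G.deletePair x y).pairMin c a
      rw [(G.deletePair x y).pairMin_symm c a]
      exact h
    have hnodL : L.Nodup := List.nodup_reverse.mpr (List.nodup_rotate.mpr hnd)
    have hheadL : L.head? = some x := by
      rw [hL, List.head?_reverse, getLast?_rotate hn0]
      refine congrArg some ?_
      rw [hxv]
      refine get_congr l _ _ ?_ |>.trans rfl
      rw [show l.length - 1 + (i.val + 1) = l.length + i.val by omega, Nat.add_mod_left,
        Nat.mod_eq_of_lt i.isLt]
    have hlastL : L.getLast? = some y := by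
      rw [hL, List.getLast?_reverse, head?_rotate hn0]
      refine congrArg some ?_
      rw [hyv]
      exact get_congr l _ _ (finRotate_val' hn0 i).symm |>.trans rfl
    have hmem : min ((G.deletePair x y).chainStrength L) ((G.deletePair x y).eta y x) ∈
        (G.deletePair x y).pathStrengths x x y :=
      ⟨L, hnodL, hheadL, Or.inr ⟨hlastL, rfl⟩⟩
    have hchainval : w < (G.deletePair x y).chainStrength L :=
      ((G.deletePair x y).lt_chainStrength_iff hw1 L).mpr hchain
    have hle := le_csSup ((G.deletePair x y).bddAbove_pathStrengths x x y) hmem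
    rw [hxyv]
    exact lt_of_lt_of_le (lt_min_iff.mpr ⟨hchainval, hwyx⟩) hle
  · -- b = false : path is the rotation itself
    set L : List V := l.rotate (i.val + 1) with hL
    have hchain : L.Chain' (fun a c => w < (G.deletePair x y).pairMin a c) :=
      G.chain'_rotate hnd hlen3 i hgt' (Or.inr ⟨hxv, hyv⟩)
    have hnodL : L.Nodup := List.nodup_rotate.mpr hnd
    have hheadL : L.head? = some x := by
      rw [hL, head?_rotate hn0]
      refine congrArg some ?_
      rw [hxv]
      exact get_congr l _ _ (finRotate_val' hn0 i).symm |>.trans rfl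
    have hlastL : L.getLast? = some y := by
      rw [hL, getLast?_rotate hn0]
      refine congrArg some ?_
      rw [hyv]
      refine get_congr l _ _ ?_ |>.trans rfl
      rw [show l.length - 1 + (i.val + 1) = l.length + i.val by omega, Nat.add_mod_left,
        Nat.mod_eq_of_lt i.isLt]
    have hmem : min ((G.deletePair x y).chainStrength L) ((G.deletePair x y).eta y x) ∈
        (G.deletePair x y).pathStrengths x x y :=
      ⟨L, hnodL, hheadL, Or.inr ⟨hlastL, rfl⟩⟩
    have hchainval : w < (G.deletePair x y).chainStrength L :=
      ((G.deletePair x y).lt_chainStrength_iff hw1 L).mpr hchain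
    have hle := le_csSup ((G.deletePair x y).bddAbove_pathStrengths x x y) hmem
    rw [hxyv]
    exact lt_of_lt_of_le (lt_min_iff.mpr ⟨hchainval, hwyx⟩) hle


lemma pairMin_le_left (G : FIG V) (a b : V) : G.pairMin a b ≤ G.eta a b := min_le_left _ _

lemma pairMin_le_right (G : FIG V) (a b : V) : G.pairMin a b ≤ G.eta b a := min_le_right _ _

end Auxiliary

/-- **Theorem 4.** A fuzzy incidence graph is a strong fuzzy incidence graph if and only
if every cycle in it is a weak fuzzy incidence cycle. -/
theorem strong_iff_forall_cycle_isWFIC (G : FIG V) :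
    G.Strong ↔ ∀ l : List V, G.IsCycle l → G.IsWFIC l := by
  constructor
  · -- a strong FIG has only weak cycles
    intro hS l hcyc
    by_contra hW
    obtain ⟨hlen3, hnd, hpairs⟩ := hcyc
    have hn0 : 0 < l.length := by omega
    have : Nonempty (Fin l.length × Bool) := ⟨(⟨0, hn0⟩, true)⟩
    obtain ⟨p, hp⟩ := Finite.exists_min (G.cyclePairWeight l)
    have hgt : ∀ r, r ≠ p → G.cyclePairWeight l p < G.cyclePairWeight l r := by
      intro q hq
      rcases (hp q).lt_or_eq with h | h
      · exact h
      · exact absurd ⟨⟨hlen3, hnd, hpairs⟩, p, q, hq.symm, h, hp⟩ hW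
    obtain ⟨i, b⟩ := p
    cases b
    · have hkey := G.eta_lt_ICONN_of_unique_min hlen3 hnd i false hgt
        (Or.inr ⟨rfl, rfl, rfl⟩)
      exact absurd (hS _ _ (hpairs i).2) (not_le.mpr hkey)
    · have hkey := G.eta_lt_ICONN_of_unique_min hlen3 hnd i true hgt
        (Or.inl ⟨rfl, rfl, rfl⟩)
      exact absurd (hS _ _ (hpairs i).1) (not_le.mpr hkey)
  · -- if all cycles are weak, the FIG is strong
    intro hC x y hxy
    by_contra hns
    have hlt : G.eta x y < (G.deletePair x y).ICONN x x y := not_le.mp hns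
    obtain ⟨s, hsmem, hws⟩ :=
      exists_lt_of_lt_csSup ((G.deletePair x y).pathStrengths_nonempty x y) hlt
    obtain ⟨L, hnd, hhead, hcases⟩ := hsmem
    have hw0 : (0:ℝ) < G.eta x y := hxy
    rcases hcases with ⟨hlast, rfl⟩ | ⟨hlast, rfl⟩
    · -- the path ends at `x`: its strength is `0`
      have h0 : min ((G.deletePair x y).chainStrength L) ((G.deletePair x y).eta x y) ≤ 0 := by
        rw [G.deletePair_eta_self]; exact min_le_right _ _
      linarith
    · -- the path ends at `y`: close it up into a cycle
      have hs1 : G.eta x y < (G.deletePair x y).chainStrength L :=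
        lt_of_lt_of_le hws (min_le_left _ _)
      have hs2 : G.eta x y < (G.deletePair x y).eta y x :=
        lt_of_lt_of_le hws (min_le_right _ _)
      have hw1 : G.eta x y < 1 := lt_of_lt_of_le hs2 ((G.deletePair x y).eta_le_one y x)
      have hyx : G.eta x y < G.eta y x := lt_of_lt_of_le hs2 (G.deletePair_eta_le x y y x)
      have hchain' : L.Chain' (fun a c => G.eta x y < (G.deletePair x y).pairMin a c) :=
        ((G.deletePair x y).lt_chainStrength_iff hw1 L).mp hs1
      have hchain : L.Chain' (fun a c => G.eta x y < G.pairMin a c) :=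
        hchain'.imp (fun a c h => lt_of_lt_of_le h (G.pairMin_deletePair_le x y a c))
      have hxyne : x ≠ y := by
        intro h
        have h1 : G.eta x y ≤ G.rho x y := (G.eta_le x y).trans (min_le_right _ _)
        rw [h, G.rho_irrefl] at h1
        rw [h] at hw0
        linarith
      have hL0 : 0 < L.length := by
        cases L with
        | nil => simp at hhead
        | cons a t => simp
      have hget0 : L.get ⟨0, hL0⟩ = x := by
        rw [head?_eq_get hL0] at hhead; exact Option.some.inj hhead
      have hgetlast : L.get ⟨L.length - 1, by omega⟩ = y := by
        rw [getLast?_eq_get hL0] at hlast; exact Option.some.inj hlast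
      have hlen3 : 3 ≤ L.length := by
        by_contra hlen
        have h1 : L.length = 1 ∨ L.length = 2 := by omega
        rcases h1 with h1 | h1
        · exact hxyne
            ((hget0.symm).trans ((get_congr L hL0 (by omega) (by omega)).trans hgetlast))
        · have hstep := chain'_iff_get'.mp hchain' 0 (by omega)
          have e2 : L.get ⟨1, by omega⟩ = y := by
            rw [← hgetlast]; exact get_congr L (by omega) (by omega) (by omega)
          rw [hget0, e2] at hstep
          have h3 : (G.deletePair x y).pairMin x y ≤ 0 := by
            have h4 := (G.deletePair x y).pairMin_le_left x y
            rw [G.deletePair_eta_self] at h4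
            exact h4
          linarith
      have hLcyc : G.IsCycle L := by
        refine ⟨hlen3, hnd, ?_⟩
        intro j
        by_cases hj : j.val + 1 < L.length
        · have hrot : finRotate L.length j = ⟨j.val + 1, hj⟩ :=
            Fin.ext (by rw [finRotate_val' (by omega) j]; exact Nat.mod_eq_of_lt hj)
          have hstep := chain'_iff_get'.mp hchain j.val (by omega)
          rw [hrot]
          constructor
          · exact lt_trans hw0 (lt_of_lt_of_le hstep (G.pairMin_le_left _ _))
          · exact lt_trans hw0 (lt_of_lt_of_le hstep (G.pairMin_le_right _ _))
        · have hjval : j.val = L.length - 1 := by have := j.isLt; omega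
          have hrot : finRotate L.length j = ⟨0, hL0⟩ := by
            refine Fin.ext ?_
            rw [finRotate_val' (by omega) j, hjval,
              show L.length - 1 + 1 = L.length by omega]
            exact Nat.mod_self _
          have hgj : L.get j = y := by
            rw [← hgetlast]; exact get_congr L j.isLt (by omega) hjval
          rw [hrot, hgj, hget0]
          exact ⟨lt_trans hw0 hyx, hxy⟩
      obtain ⟨-, p, q, hpq, heq, hmin⟩ := hC L hLcyc
      have hrotlast : finRotate L.length ⟨L.length - 1, by omega⟩ = ⟨0, hL0⟩ := by
        refine Fin.ext ?_
        rw [finRotate_val' (by omega)]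
        show (L.length - 1 + 1) % L.length = 0
        rw [show L.length - 1 + 1 = L.length by omega]
        exact Nat.mod_self _
      have hwp0 : G.cyclePairWeight L (⟨L.length - 1, by omega⟩, false) = G.eta x y := by
        show G.eta (L.get (finRotate L.length ⟨L.length - 1, by omega⟩))
            (L.get ⟨L.length - 1, by omega⟩) = G.eta x y
        rw [hrotlast, hget0, hgetlast]
      have hgt : ∀ r : Fin L.length × Bool, r ≠ (⟨L.length - 1, by omega⟩, false) →
          G.eta x y < G.cyclePairWeight L r := by
        rintro ⟨j, c⟩ hr
        by_cases hj : j.val + 1 < L.length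
        · have hrot : finRotate L.length j = ⟨j.val + 1, hj⟩ :=
            Fin.ext (by rw [finRotate_val' (by omega) j]; exact Nat.mod_eq_of_lt hj)
          have hstep := chain'_iff_get'.mp hchain j.val (by omega)
          cases c
          · show G.eta x y < G.eta (L.get (finRotate L.length j)) (L.get j)
            rw [hrot]
            exact lt_of_lt_of_le hstep (G.pairMin_le_right _ _)
          · show G.eta x y < G.eta (L.get j) (L.get (finRotate L.length j))
            rw [hrot]
            exact lt_of_lt_of_le hstep (G.pairMin_le_left _ _)
        · have hjval : j.val = L.length - 1 := by have := j.isLt; omega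
          have hc : c = true := by
            by_contra hc
            have hcf : c = false := by simpa using hc
            apply hr
            rw [hcf]
            exact Prod.ext (Fin.ext hjval) rfl
          have hrot : finRotate L.length j = ⟨0, hL0⟩ := by
            refine Fin.ext ?_
            rw [finRotate_val' (by omega) j, hjval,
              show L.length - 1 + 1 = L.length by omega]
            exact Nat.mod_self _
          have hgj : L.get j = y := by
            rw [← hgetlast]; exact get_congr L j.isLt (by omega) hjval
          rw [hc]
          show G.eta x y < G.eta (L.get j) (L.get (finRotate L.length j))
          rw [hrot, hgj, hget0]
          exact hyx
      rcases eq_or_ne p (⟨L.length - 1, by omega⟩, false) with hp | hp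
      · have h1 := hgt q (fun h => hpq (hp.trans h.symm))
        rw [← heq, hp, hwp0] at h1
        exact lt_irrefl _ h1
      · have h1 := hgt p hp
        have h2 := hmin (⟨L.length - 1, by omega⟩, false)
        rw [hwp0] at h2
        linarith


end FIG
end

section
/- If X̃₁ and X̃₂ are complete fuzzy incidence graphs, then their composition X̃ = X̃₁[X̃₂] is a complete fuzzy incidence graph. -/
open scoped BigOperators

namespace FIG

variable {V V₁ V₂ : Type} [Fintype V] [DecidableEq V]
  [Fintype V₁] [DecidableEq V₁] [Fintype V₂] [DecidableEq V₂]

/-- `x` is a strong incidence neighbour of `y`: both `(x, xy)` and `(y, xy)` are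
(genuine) strong pairs. -/
def SIN (G : FIG V) (x y : V) : Prop :=
  G.IsPair x y ∧ G.IsPair y x ∧ G.IsStrongPair x y ∧ G.IsStrongPair y x

/-- a strong incidence dominating set (SIDS) -/
def SIDS (G : FIG V) (D : Finset V) : Prop :=
  ∀ x, x ∉ D → ∃ y ∈ D, G.SIN x y

/-- the contribution of a vertex `x` to the weight of a dominating set: the minimum
weight of a strong pair `(x, xy)` with `y` a strong incidence neighbour of `x` -/
noncomputable def vertexWeight (G : FIG V) (x : V) : ℝ :=
  sInf {w | ∃ y, G.SIN x y ∧ w = G.eta x y}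

/-- the weight `W(D)` of a strong incidence dominating set -/
noncomputable def weight (G : FIG V) (D : Finset V) : ℝ :=
  ∑ x ∈ D, G.vertexWeight x

/-- the strong incidence domination number `γ_IS`: the least weight of a SIDS -/
noncomputable def gammaIS (G : FIG V) : ℝ :=
  sInf {w | ∃ D : Finset V, G.SIDS D ∧ w = G.weight D}

/-- a minimum strong incidence dominating set -/
def MinSIDS (G : FIG V) (D : Finset V) : Prop :=
  G.SIDS D ∧ G.weight D = G.gammaIS

/-- a complete fuzzy incidence graph: every two distinct vertices are joined by an edge,
every edge has weight `min (eps x) (eps y)`, and every pair on an edge is effective -/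
def Complete (G : FIG V) : Prop :=
  (∀ x, 0 < G.eps x) ∧
  (∀ x y, x ≠ y → 0 < G.rho x y) ∧
  (∀ x y, x ≠ y → G.rho x y = min (G.eps x) (G.eps y)) ∧
  (∀ x y, 0 < G.rho x y → G.eta x y = min (G.eps x) (G.rho x y))

/-- The composition `G₁[G₂]` of two fuzzy incidence graphs: `(a₁,b₁)(a₂,b₂)` is an edge
when `a₁ = a₂` and `b₁b₂ ∈ E₂`, or `a₁a₂ ∈ E₁`; a pair of the composition exists when
both corresponding pairs of the relevant factor exist. -/
noncomputable def comp (G₁ : FIG V₁) (G₂ : FIG V₂) : FIG (V₁ × V₂) where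
  eps := fun p => min (G₁.eps p.1) (G₂.eps p.2)
  rho := fun p q =>
    if p.1 = q.1 then min (G₁.eps p.1) (G₂.rho p.2 q.2)
    else if p.2 = q.2 then min (G₁.rho p.1 q.1) (G₂.eps p.2)
    else min (G₁.rho p.1 q.1) (min (G₂.eps p.2) (G₂.eps q.2))
  eta := fun p q =>
    if p.1 = q.1 then
      (if 0 < G₂.eta p.2 q.2 ∧ 0 < G₂.eta q.2 p.2 then
        min (G₁.eps p.1) (G₂.eta p.2 q.2) else 0)
    else if 0 < G₁.eta p.1 q.1 ∧ 0 < G₁.eta q.1 p.1 then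
      (if p.2 = q.2 then min (G₁.eta p.1 q.1) (G₂.eps p.2)
       else min (G₁.eta p.1 q.1) (min (G₂.eps p.2) (G₂.eps q.2)))
    else 0
  eps_nonneg := fun p => le_min (G₁.eps_nonneg p.1) (G₂.eps_nonneg p.2)
  eps_le_one := fun p => min_le_of_left_le (G₁.eps_le_one p.1)
  rho_nonneg := by
    intro p q; split
    · exact le_min (G₁.eps_nonneg _) (G₂.rho_nonneg _ _)
    · split
      · exact le_min (G₁.rho_nonneg _ _) (G₂.eps_nonneg _)
      · exact le_min (G₁.rho_nonneg _ _) (le_min (G₂.eps_nonneg _) (G₂.eps_nonneg _))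
  rho_symm := by
    intro p q
    by_cases h1 : p.1 = q.1
    · simp [h1, G₂.rho_symm p.2 q.2]
    · by_cases h2 : p.2 = q.2
      · simp [h1, Ne.symm h1, h2, G₁.rho_symm p.1 q.1]
      · simp [h1, Ne.symm h1, h2, Ne.symm h2, G₁.rho_symm p.1 q.1, min_comm (G₂.eps p.2) (G₂.eps q.2)]
  rho_le := by
    intro p q; split
    · rename_i h1
      refine le_min (le_min (min_le_left _ _) (min_le_of_right_le ?_))
        (le_min (h1 ▸ min_le_left _ _) (min_le_of_right_le ?_))
      · exact le_trans (G₂.rho_le p.2 q.2) (min_le_left _ _)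
      · exact le_trans (G₂.rho_le p.2 q.2) (min_le_right _ _)
    · split
      · rename_i h1 h2
        refine le_min (le_min (min_le_of_left_le ?_) (min_le_right _ _))
          (le_min (min_le_of_left_le ?_) (h2 ▸ min_le_right _ _))
        · exact le_trans (G₁.rho_le p.1 q.1) (min_le_left _ _)
        · exact le_trans (G₁.rho_le p.1 q.1) (min_le_right _ _)
      · refine le_min (le_min (min_le_of_left_le ?_) (min_le_of_right_le (min_le_left _ _)))
          (le_min (min_le_of_left_le ?_) (min_le_of_right_le (min_le_right _ _)))
        · exact le_trans (G₁.rho_le p.1 q.1) (min_le_left _ _)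
        · exact le_trans (G₁.rho_le p.1 q.1) (min_le_right _ _)
  rho_irrefl := by
    intro p
    rw [if_pos rfl, G₂.rho_irrefl]
    exact min_eq_right (G₁.eps_nonneg p.1)
  eta_nonneg := by
    intro p q; split
    · split
      · exact le_min (G₁.eps_nonneg _) (G₂.eta_nonneg _ _)
      · exact le_refl 0
    · split
      · split
        · exact le_min (G₁.eta_nonneg _ _) (G₂.eps_nonneg _)
        · exact le_min (G₁.eta_nonneg _ _) (le_min (G₂.eps_nonneg _) (G₂.eps_nonneg _))
      · exact le_refl 0
  eta_le := by
    intro p q; split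
    · split
      · refine le_min (le_min (min_le_left _ _) (min_le_of_right_le ?_))
          (le_min (min_le_left _ _) (min_le_of_right_le ?_))
        · exact le_trans (G₂.eta_le p.2 q.2) (min_le_left _ _)
        · exact le_trans (G₂.eta_le p.2 q.2) (min_le_right _ _)
      · exact le_min (le_min (G₁.eps_nonneg _) (G₂.eps_nonneg _))
          (le_min (G₁.eps_nonneg _) (G₂.rho_nonneg _ _))
    · split
      · split
        · rename_i hg h2
          refine le_min (le_min (min_le_of_left_le ?_) (min_le_right _ _))
            (le_min (min_le_of_left_le ?_) (min_le_right _ _))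
          · exact le_trans (G₁.eta_le p.1 q.1) (min_le_left _ _)
          · exact le_trans (G₁.eta_le p.1 q.1) (min_le_right _ _)
        · refine le_min (le_min (min_le_of_left_le ?_) (min_le_of_right_le (min_le_left _ _)))
            (le_min (min_le_of_left_le ?_) (min_le_right _ _))
          · exact le_trans (G₁.eta_le p.1 q.1) (min_le_left _ _)
          · exact le_trans (G₁.eta_le p.1 q.1) (min_le_right _ _)
      · split
        · exact le_min (le_min (G₁.eps_nonneg _) (G₂.eps_nonneg _))
            (le_min (G₁.rho_nonneg _ _) (G₂.eps_nonneg _))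
        · exact le_min (le_min (G₁.eps_nonneg _) (G₂.eps_nonneg _))
            (le_min (G₁.rho_nonneg _ _) (le_min (G₂.eps_nonneg _) (G₂.eps_nonneg _)))

/-- **Proposition 41.** The composition of two complete fuzzy incidence graphs is a
complete fuzzy incidence graph. -/
theorem comp_complete (G₁ : FIG V₁) (G₂ : FIG V₂)
    (h₁ : G₁.Complete) (h₂ : G₂.Complete) : (G₁.comp G₂).Complete := by
  obtain ⟨e1, r1, req1, et1⟩ := h₁
  obtain ⟨e2, r2, req2, et2⟩ := h₂
  refine ⟨fun p => lt_min (e1 p.1) (e2 p.2), ?_, ?_, ?_⟩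
  · intro p q hpq
    simp only [comp]
    by_cases h : p.1 = q.1
    · have hb : p.2 ≠ q.2 := fun h2 => hpq (Prod.ext h h2)
      rw [if_pos h]
      exact lt_min (e1 p.1) (r2 _ _ hb)
    · rw [if_neg h]
      split
      · exact lt_min (r1 _ _ h) (e2 _)
      · exact lt_min (r1 _ _ h) (lt_min (e2 _) (e2 _))
  · intro p q hpq
    simp only [comp]
    by_cases h : p.1 = q.1
    · have hb : p.2 ≠ q.2 := fun h2 => hpq (Prod.ext h h2)
      rw [if_pos h, req2 _ _ hb, ← h]
      simp [min_assoc, min_comm, min_left_comm]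
    · rw [if_neg h, req1 _ _ h]
      by_cases h2 : p.2 = q.2
      · rw [if_pos h2, ← h2]
        simp [min_assoc, min_comm, min_left_comm]
      · rw [if_neg h2]
        simp [min_assoc, min_comm, min_left_comm]
  · intro p q hpos
    simp only [comp] at hpos ⊢
    by_cases h : p.1 = q.1
    · rw [if_pos h] at hpos ⊢
      have hr2 : 0 < G₂.rho p.2 q.2 := (lt_min_iff.mp hpos).2
      have hb : p.2 ≠ q.2 := by
        intro h2; rw [h2, G₂.rho_irrefl] at hr2; exact lt_irrefl 0 hr2
      have he1 : 0 < G₂.eta p.2 q.2 := by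
        rw [et2 _ _ hr2]; exact lt_min (e2 _) hr2
      have he2 : 0 < G₂.eta q.2 p.2 := by
        rw [et2 _ _ (G₂.rho_symm p.2 q.2 ▸ hr2)]
        exact lt_min (e2 _) (G₂.rho_symm p.2 q.2 ▸ hr2)
      rw [if_pos ⟨he1, he2⟩, et2 _ _ hr2, ← h]
      simp [min_assoc, min_comm, min_left_comm]
    · rw [if_neg h] at hpos ⊢
      have hr1 : 0 < G₁.rho p.1 q.1 := by
        by_cases h2 : p.2 = q.2
        · rw [if_pos h2] at hpos; exact (lt_min_iff.mp hpos).1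
        · rw [if_neg h2] at hpos; exact (lt_min_iff.mp hpos).1
      have he1 : 0 < G₁.eta p.1 q.1 := by
        rw [et1 _ _ hr1]; exact lt_min (e1 _) hr1
      have he2 : 0 < G₁.eta q.1 p.1 := by
        rw [et1 _ _ (G₁.rho_symm p.1 q.1 ▸ hr1)]
        exact lt_min (e1 _) (G₁.rho_symm p.1 q.1 ▸ hr1)
      rw [if_pos ⟨he1, he2⟩, et1 _ _ hr1]
      simp only [if_neg h]
      by_cases h2 : p.2 = q.2
      · rw [if_pos h2]
        simp [h2, min_assoc, min_comm, min_left_comm]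
      · rw [if_neg h2]
        simp [h2, min_assoc, min_comm, min_left_comm]

end FIG
end
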